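/- Let $f_0$ be the density of Student's $t$ distribution with $d_0$ degrees of freedom and $f_1(x)=g_{d_1}(x-C)$ where $g_{d_1}$ is the Student $t_{d_1}$ density and $C>0$. If $d_0>d_1$ then $\lim_{x\to\infty} f_1(x)/f_0(x)=\infty$; if $1\le d_0\le d_1$ then $\limsup_{x\to\infty} f_1(x)/f_0(x)<\infty$. -/

import Mathlib

open Filter Real

/-- Student's t density with `d` degrees of freedom. -/
noncomputable def studentDensity (d : ℝ) (x : ℝ) : ℝ :=
  (Real.Gamma ((d + 1) / 2) / (Real.sqrt (d * Real.pi) * Real.Gamma (d / 2)))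
    * (1 + x ^ 2 / d) ^ (-((d + 1) / 2))

private lemma sq_rpow_aux {x : ℝ} (hx : 0 < x) (p : ℝ) : (x ^ 2) ^ p = x ^ (2 * p) := by
  rw [← Real.rpow_natCast x 2, ← Real.rpow_mul hx.le]
  norm_num

set_option maxHeartbeats 1000000 in
/-- Density-ratio condition of Corollary 4.2: with `f₀` the `t_{d₀}` density and
`f₁(x) = g_{d₁}(x - C)` for `C > 0`: if `d₀ > d₁` then `f₁(x)/f₀(x) → ∞` as `x → ∞`;
if `1 ≤ d₀ ≤ d₁` then the limsup of `f₁/f₀` at `∞` is finite. -/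
theorem student_density_ratio
    (d₀ d₁ C : ℝ) (hd₀ : 0 < d₀) (hd₁ : 0 < d₁) (hC : 0 < C)
    (f₀ f₁ : ℝ → ℝ)
    (hf₀ : f₀ = fun x => studentDensity d₀ x)
    (hf₁ : f₁ = fun x => studentDensity d₁ (x - C)) :
    (d₁ < d₀ → Tendsto (fun x => f₁ x / f₀ x) atTop atTop) ∧
    (1 ≤ d₀ → d₀ ≤ d₁ → ∃ M : ℝ, ∀ᶠ x in atTop, f₁ x / f₀ x ≤ M) := by
  have hpi := Real.pi_pos
  have hK₀ : 0 < Real.Gamma ((d₀ + 1) / 2) / (Real.sqrt (d₀ * Real.pi) * Real.Gamma (d₀ / 2)) :=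
    div_pos (Real.Gamma_pos_of_pos (by linarith))
      (mul_pos (Real.sqrt_pos.2 (by positivity)) (Real.Gamma_pos_of_pos (by positivity)))
  have hK₁ : 0 < Real.Gamma ((d₁ + 1) / 2) / (Real.sqrt (d₁ * Real.pi) * Real.Gamma (d₁ / 2)) :=
    div_pos (Real.Gamma_pos_of_pos (by linarith))
      (mul_pos (Real.sqrt_pos.2 (by positivity)) (Real.Gamma_pos_of_pos (by positivity)))
  set K : ℝ := (Real.Gamma ((d₁ + 1) / 2) / (Real.sqrt (d₁ * Real.pi) * Real.Gamma (d₁ / 2)))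
      / (Real.Gamma ((d₀ + 1) / 2) / (Real.sqrt (d₀ * Real.pi) * Real.Gamma (d₀ / 2))) with hKdef
  have hK : 0 < K := div_pos hK₁ hK₀
  have key : ∀ x : ℝ, f₁ x / f₀ x
      = K * ((1 + x ^ 2 / d₀) ^ ((d₀ + 1) / 2) / (1 + (x - C) ^ 2 / d₁) ^ ((d₁ + 1) / 2)) := by
    intro x
    have hA : (0:ℝ) < 1 + x ^ 2 / d₀ := by positivity
    have hB : (0:ℝ) < 1 + (x - C) ^ 2 / d₁ := by positivity
    have hAp : (0:ℝ) < (1 + x ^ 2 / d₀) ^ ((d₀ + 1) / 2) := Real.rpow_pos_of_pos hA _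
    have hBp : (0:ℝ) < (1 + (x - C) ^ 2 / d₁) ^ ((d₁ + 1) / 2) := Real.rpow_pos_of_pos hB _
    simp only [hf₀, hf₁, studentDensity, hKdef]
    rw [Real.rpow_neg hA.le, Real.rpow_neg hB.le]
    field_simp
    try ring
  clear_value K
  constructor
  · -- d₁ < d₀ : tendsto atTop
    intro hlt
    have hq : 0 < d₀ - d₁ := by linarith
    have hden : (0:ℝ) < d₀ ^ ((d₀ + 1) / 2) * (1 + 1 / d₁) ^ ((d₁ + 1) / 2) := by positivity
    set c : ℝ := K / (d₀ ^ ((d₀ + 1) / 2) * (1 + 1 / d₁) ^ ((d₁ + 1) / 2)) with hcdef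
    have hc : 0 < c := div_pos hK hden
    refine tendsto_atTop_mono' atTop ?_ ((tendsto_rpow_atTop hq).const_mul_atTop hc)
    filter_upwards [eventually_ge_atTop (max 1 C)] with x hx
    have hx1 : (1:ℝ) ≤ x := le_trans (le_max_left _ _) hx
    have hxC : C ≤ x := le_trans (le_max_right _ _) hx
    have hxpos : (0:ℝ) < x := lt_of_lt_of_le one_pos hx1
    have hA : (0:ℝ) < 1 + x ^ 2 / d₀ := by positivity
    have hB : (0:ℝ) < 1 + (x - C) ^ 2 / d₁ := by positivity
    have hAlb : (x ^ 2 / d₀) ^ ((d₀ + 1) / 2) ≤ (1 + x ^ 2 / d₀) ^ ((d₀ + 1) / 2) :=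
      Real.rpow_le_rpow (by positivity) (by linarith) (by positivity)
    have hBub : (1 + (x - C) ^ 2 / d₁) ^ ((d₁ + 1) / 2) ≤ (x ^ 2 * (1 + 1 / d₁)) ^ ((d₁ + 1) / 2) := by
      apply Real.rpow_le_rpow hB.le ?_ (by positivity)
      have h1 : (x - C) ^ 2 ≤ x ^ 2 := by nlinarith
      have h2 : (1:ℝ) ≤ x ^ 2 := by nlinarith
      have h3 : (x - C) ^ 2 / d₁ ≤ x ^ 2 / d₁ := by gcongr
      have : x ^ 2 * (1 + 1 / d₁) = x ^ 2 + x ^ 2 / d₁ := by ring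
      rw [this]
      linarith
    have hratio : (x ^ 2 / d₀) ^ ((d₀ + 1) / 2) / (x ^ 2 * (1 + 1 / d₁)) ^ ((d₁ + 1) / 2)
        ≤ (1 + x ^ 2 / d₀) ^ ((d₀ + 1) / 2) / (1 + (x - C) ^ 2 / d₁) ^ ((d₁ + 1) / 2) :=
      div_le_div₀ (by positivity) hAlb (Real.rpow_pos_of_pos hB _) hBub
    have heq : (x ^ 2 / d₀) ^ ((d₀ + 1) / 2) / (x ^ 2 * (1 + 1 / d₁)) ^ ((d₁ + 1) / 2)
        = x ^ (d₀ - d₁) / (d₀ ^ ((d₀ + 1) / 2) * (1 + 1 / d₁) ^ ((d₁ + 1) / 2)) := by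
      rw [Real.div_rpow (by positivity) hd₀.le,
        Real.mul_rpow (by positivity) (by positivity),
        sq_rpow_aux hxpos, sq_rpow_aux hxpos,
        show d₀ - d₁ = 2 * ((d₀ + 1) / 2) - 2 * ((d₁ + 1) / 2) by ring,
        Real.rpow_sub hxpos]
      have h1 : d₀ ^ ((d₀ + 1) / 2) ≠ 0 := by positivity
      have h2 : x ^ (2 * ((d₁ + 1) / 2)) ≠ 0 := by positivity
      have h3 : (1 + 1 / d₁) ^ ((d₁ + 1) / 2) ≠ 0 := by positivity
      field_simp
      try (left; ring_nf)
    calc c * x ^ (d₀ - d₁)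
        = K * ((x ^ 2 / d₀) ^ ((d₀ + 1) / 2) / (x ^ 2 * (1 + 1 / d₁)) ^ ((d₁ + 1) / 2)) := by
          rw [heq, hcdef]; field_simp
      _ ≤ K * ((1 + x ^ 2 / d₀) ^ ((d₀ + 1) / 2) / (1 + (x - C) ^ 2 / d₁) ^ ((d₁ + 1) / 2)) :=
          mul_le_mul_of_nonneg_left hratio hK.le
      _ = f₁ x / f₀ x := (key x).symm
  · -- 1 ≤ d₀ ≤ d₁ : bounded
    intro _ hle
    refine ⟨K * ((1 + 1 / d₀) ^ ((d₀ + 1) / 2) * (4 * d₁) ^ ((d₁ + 1) / 2)), ?_⟩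
    filter_upwards [eventually_ge_atTop (max 1 (2 * C))] with x hx
    have hx1 : (1:ℝ) ≤ x := le_trans (le_max_left _ _) hx
    have hx2C : 2 * C ≤ x := le_trans (le_max_right _ _) hx
    have hxpos : (0:ℝ) < x := lt_of_lt_of_le one_pos hx1
    have hB : (0:ℝ) < 1 + (x - C) ^ 2 / d₁ := by positivity
    have hAub : (1 + x ^ 2 / d₀) ^ ((d₀ + 1) / 2) ≤ (x ^ 2 * (1 + 1 / d₀)) ^ ((d₀ + 1) / 2) := by
      apply Real.rpow_le_rpow (by positivity) ?_ (by positivity)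
      have h2 : (1:ℝ) ≤ x ^ 2 := by nlinarith
      have : x ^ 2 * (1 + 1 / d₀) = x ^ 2 + x ^ 2 / d₀ := by ring
      rw [this]
      linarith
    have hBlb : (x ^ 2 / (4 * d₁)) ^ ((d₁ + 1) / 2) ≤ (1 + (x - C) ^ 2 / d₁) ^ ((d₁ + 1) / 2) := by
      apply Real.rpow_le_rpow (by positivity) ?_ (by positivity)
      have h1 : x ^ 2 / 4 ≤ (x - C) ^ 2 := by nlinarith
      have h2 : x ^ 2 / (4 * d₁) ≤ (x - C) ^ 2 / d₁ := by
        rw [div_le_div_iff₀ (by positivity) hd₁]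
        nlinarith
      linarith
    have hratio : (1 + x ^ 2 / d₀) ^ ((d₀ + 1) / 2) / (1 + (x - C) ^ 2 / d₁) ^ ((d₁ + 1) / 2)
        ≤ (x ^ 2 * (1 + 1 / d₀)) ^ ((d₀ + 1) / 2) / (x ^ 2 / (4 * d₁)) ^ ((d₁ + 1) / 2) :=
      div_le_div₀ (by positivity) hAub (by positivity) hBlb
    have heq : (x ^ 2 * (1 + 1 / d₀)) ^ ((d₀ + 1) / 2) / (x ^ 2 / (4 * d₁)) ^ ((d₁ + 1) / 2)
        = x ^ (d₀ - d₁) * ((1 + 1 / d₀) ^ ((d₀ + 1) / 2) * (4 * d₁) ^ ((d₁ + 1) / 2)) := by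
      rw [Real.mul_rpow (by positivity) (by positivity),
        Real.div_rpow (by positivity) (by positivity),
        sq_rpow_aux hxpos, sq_rpow_aux hxpos,
        show d₀ - d₁ = 2 * ((d₀ + 1) / 2) - 2 * ((d₁ + 1) / 2) by ring,
        Real.rpow_sub hxpos]
      have h2 : x ^ (2 * ((d₁ + 1) / 2)) ≠ 0 := by positivity
      have h3 : (4 * d₁ : ℝ) ^ ((d₁ + 1) / 2) ≠ 0 := by positivity
      field_simp
      all_goals first | ring | exact Or.inl (by ring) | tauto
    have hxq : x ^ (d₀ - d₁) ≤ 1 :=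
      Real.rpow_le_one_of_one_le_of_nonpos hx1 (by linarith)
    calc f₁ x / f₀ x
        = K * ((1 + x ^ 2 / d₀) ^ ((d₀ + 1) / 2) / (1 + (x - C) ^ 2 / d₁) ^ ((d₁ + 1) / 2)) :=
          key x
      _ ≤ K * ((x ^ 2 * (1 + 1 / d₀)) ^ ((d₀ + 1) / 2) / (x ^ 2 / (4 * d₁)) ^ ((d₁ + 1) / 2)) :=
          mul_le_mul_of_nonneg_left hratio hK.le
      _ = K * (x ^ (d₀ - d₁) * ((1 + 1 / d₀) ^ ((d₀ + 1) / 2) * (4 * d₁) ^ ((d₁ + 1) / 2))) := by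
          rw [heq]
      _ ≤ K * (1 * ((1 + 1 / d₀) ^ ((d₀ + 1) / 2) * (4 * d₁) ^ ((d₁ + 1) / 2))) := by
          apply mul_le_mul_of_nonneg_left ?_ hK.le
          exact mul_le_mul_of_nonneg_right hxq (by positivity)
      _ = K * ((1 + 1 / d₀) ^ ((d₀ + 1) / 2) * (4 * d₁) ^ ((d₁ + 1) / 2)) := by ring
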